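/- Let $(\xi_n)_{n\ge1}$ be i.i.d. positive random variables with $\lambda := \mathbb{E}[\log\xi_1]$ existing in $[-\infty,\infty)$, let $c>0$ be a constant, and let $(\delta_l)_{l\ge1}$ be a deterministic real sequence with $\delta_l\to0$. Define $\Phi_n := \frac{1}{n}\sum_{k=1}^n\log\xi_k$ and $\psi_n := \log\big(c + \sum_{l=1}^n e^{l(\Phi_l+\delta_l)}\big)$. Then $\psi_n/n \to \lambda_+ := \max(\lambda,0)$ almost surely. -/

import Mathlib

open MeasureTheory Filter Finset ProbabilityTheory Topology
open scoped ENNReal NNReal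

lemma sum_Icc_one' (f : ℕ → ℝ) (n : ℕ) :
    ∑ l ∈ Finset.Icc 1 n, f l = ∑ i ∈ Finset.range n, f (i + 1) := by
  induction n with
  | zero => simp
  | succ n ih => rw [Finset.sum_range_succ, ← ih, Finset.sum_Icc_succ_top (by omega)]

lemma logsum_tendsto (L c : ℝ) (hc : 0 < c) (hL : 0 ≤ L) (b : ℕ → ℝ)
    (H1 : ∀ ε > 0, ∀ᶠ l : ℕ in atTop, b l ≤ l * (L + ε))
    (H2 : ∀ ε > 0, ∀ᶠ n : ℕ in atTop,
      (n : ℝ) * (L - ε) ≤ Real.log (c + ∑ l ∈ Finset.Icc 1 n, Real.exp (b l))) :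
    Tendsto (fun n : ℕ => Real.log (c + ∑ l ∈ Finset.Icc 1 n, Real.exp (b l)) / n)
      atTop (𝓝 L) := by
  have hsumpos : ∀ n : ℕ, 0 < c + ∑ l ∈ Finset.Icc 1 n, Real.exp (b l) := fun n =>
    add_pos_of_pos_of_nonneg hc (Finset.sum_nonneg fun l _ => (Real.exp_pos _).le)
  rw [Metric.tendsto_atTop]
  intro ε hε
  have hε2 : 0 < ε / 2 := by positivity
  obtain ⟨N₀, hN₀⟩ := eventually_atTop.mp (H1 _ hε2)
  set A : ℝ := ∑ l ∈ Finset.range N₀, Real.exp (b l) with hA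
  have hA0 : 0 ≤ A := Finset.sum_nonneg fun l _ => (Real.exp_pos _).le
  set D : ℝ := c + A + 1 with hD
  have hD1 : 1 ≤ D := by simp only [hD]; linarith
  -- upper bound
  have key : ∀ n : ℕ, N₀ ≤ n → 1 ≤ n →
      Real.log (c + ∑ l ∈ Finset.Icc 1 n, Real.exp (b l))
        ≤ Real.log ((n : ℝ) * D) + n * (L + ε / 2) := by
    intro n hn h1n
    set E : ℝ := Real.exp ((n : ℝ) * (L + ε / 2)) with hE
    have hE1 : 1 ≤ E := Real.one_le_exp (by positivity)
    have hterm : ∀ l ∈ Finset.Icc 1 n, Real.exp (b l) ≤ A + E := by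
      intro l hl
      rcases lt_or_ge l N₀ with h | h
      · have : Real.exp (b l) ≤ A :=
          Finset.single_le_sum (f := fun l => Real.exp (b l))
            (fun i _ => (Real.exp_pos _).le) (Finset.mem_range.mpr h)
        linarith [Real.exp_pos ((n : ℝ) * (L + ε / 2)), hE1]
      · have hbl : b l ≤ (l : ℝ) * (L + ε / 2) := hN₀ l h
        have hl_n : (l : ℝ) ≤ n := Nat.cast_le.mpr (Finset.mem_Icc.mp hl).2
        have : b l ≤ (n : ℝ) * (L + ε / 2) := by nlinarith
        have := Real.exp_le_exp.mpr this
        linarith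
    have hsum : ∑ l ∈ Finset.Icc 1 n, Real.exp (b l) ≤ (n : ℝ) * (A + E) := by
      calc ∑ l ∈ Finset.Icc 1 n, Real.exp (b l) ≤ ∑ _l ∈ Finset.Icc 1 n, (A + E) :=
            Finset.sum_le_sum hterm
        _ = (n : ℝ) * (A + E) := by
            rw [Finset.sum_const, Nat.card_Icc, Nat.add_sub_cancel, nsmul_eq_mul]
    have hn1 : (1 : ℝ) ≤ (n : ℝ) := Nat.one_le_cast.mpr h1n
    have hbound : c + ∑ l ∈ Finset.Icc 1 n, Real.exp (b l) ≤ (n : ℝ) * D * E := by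
      have hnE : 1 ≤ (n : ℝ) * E := by nlinarith
      have : c + (n : ℝ) * (A + E) ≤ (n : ℝ) * D * E := by
        simp only [hD]
        nlinarith [mul_nonneg (sub_nonneg.2 hnE) hc.le,
          mul_nonneg (mul_nonneg (le_trans zero_le_one hn1) hA0) (sub_nonneg.2 hE1)]
      linarith
    calc Real.log (c + ∑ l ∈ Finset.Icc 1 n, Real.exp (b l))
        ≤ Real.log ((n : ℝ) * D * E) := Real.log_le_log (hsumpos n) hbound
      _ = Real.log ((n : ℝ) * D) + n * (L + ε / 2) := by
          rw [Real.log_mul (by positivity) (Real.exp_pos _).ne', Real.log_exp]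
  -- the error term tends to 0
  have t0 : Tendsto (fun n : ℕ => Real.log ((n : ℝ) * D) / n) atTop (𝓝 0) := by
    have h1 : Tendsto (fun x : ℝ => Real.log x / x) atTop (𝓝 0) :=
      Real.isLittleO_log_id_atTop.tendsto_div_nhds_zero
    have h2 : Tendsto (fun n : ℕ => Real.log (n : ℝ) / n) atTop (𝓝 0) :=
      h1.comp tendsto_natCast_atTop_atTop
    have h3 := h2.add (tendsto_const_div_atTop_nhds_zero_nat (Real.log D))
    rw [add_zero] at h3
    apply h3.congr'
    filter_upwards [eventually_gt_atTop 0] with n hn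
    rw [Real.log_mul (by positivity) (by positivity), add_div]
  obtain ⟨N₁, hN₁⟩ := eventually_atTop.mp
    (t0.eventually_le_const (show (0:ℝ) < ε / 4 by positivity))
  obtain ⟨N₂, hN₂⟩ := eventually_atTop.mp (H2 _ hε2)
  refine ⟨max (max N₀ 1) (max N₁ N₂), fun n hn => ?_⟩
  have hnN₀ : N₀ ≤ n := le_trans (le_trans (le_max_left _ _) (le_max_left _ _)) hn
  have hn1 : 1 ≤ n := le_trans (le_trans (le_max_right _ _) (le_max_left _ _)) hn
  have hnN₁ : N₁ ≤ n := le_trans (le_trans (le_max_left _ _) (le_max_right _ _)) hn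
  have hnN₂ : N₂ ≤ n := le_trans (le_trans (le_max_right _ _) (le_max_right _ _)) hn
  have hnR : (0:ℝ) < n := by exact_mod_cast Nat.lt_of_lt_of_le Nat.zero_lt_one hn1
  set ψ : ℝ := Real.log (c + ∑ l ∈ Finset.Icc 1 n, Real.exp (b l)) with hψ
  have up : ψ / n ≤ ε / 4 + (L + ε / 2) := by
    have h := key n hnN₀ hn1
    have : ψ / n ≤ (Real.log ((n : ℝ) * D) + n * (L + ε / 2)) / n := by
      exact div_le_div_of_nonneg_right h hnR.le
    rw [add_div, mul_div_cancel_left₀ _ hnR.ne'] at this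
    have := le_trans this (add_le_add (hN₁ n hnN₁) le_rfl)
    linarith
  have low : L - ε / 2 ≤ ψ / n := by
    rw [le_div_iff₀ hnR]
    have := hN₂ n hnN₂
    linarith [this]
  rw [Real.dist_eq, abs_sub_lt_iff]
  constructor <;> linarith

lemma exists_trunc {Ω : Type*} [MeasurableSpace Ω] (P : Measure Ω) [IsProbabilityMeasure P]
    (f : Ω → ℝ) (hf : Measurable f)
    (hposi : Integrable (fun ω => max (f ω) 0) P) (hnint : ¬ Integrable f P) :
    ∃ M : ℕ, Integrable (fun ω => max (f ω) (-(M : ℝ))) P ∧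
      ∫ ω, max (f ω) (-(M : ℝ)) ∂P ≤ 0 := by
  set negf : Ω → ℝ := fun ω => max (-f ω) 0 with hnegf
  have hnm : Measurable negf := hf.neg.max measurable_const
  have hnegnn : ∀ ω, 0 ≤ negf ω := fun ω => le_max_right _ _
  have hdec : ∀ M : ℕ, (fun ω => max (f ω) (-(M : ℝ)))
      = fun ω => max (f ω) 0 - min (negf ω) (M : ℝ) := by
    intro M
    funext ω
    have hM : (0 : ℝ) ≤ (M : ℝ) := Nat.cast_nonneg M
    simp only [hnegf, max_def, min_def]
    split_ifs <;> linarith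
  have htint : ∀ M : ℕ, Integrable (fun ω => min (negf ω) (M : ℝ)) P := by
    intro M
    apply (integrable_const (M : ℝ)).mono' ((hnm.min measurable_const).aestronglyMeasurable)
    filter_upwards with ω
    rw [Real.norm_eq_abs, abs_of_nonneg (le_min (hnegnn ω) (Nat.cast_nonneg M))]
    exact min_le_right _ _
  have hgint : ∀ M : ℕ, Integrable (fun ω => max (f ω) (-(M : ℝ))) P := by
    intro M; rw [hdec M]; exact hposi.sub (htint M)
  have hnegnint : ¬ Integrable negf P := by
    intro h
    apply hnint
    have h2 := hposi.sub h
    exact h2.congr (ae_of_all _ fun ω => max_zero_sub_max_neg_zero_eq_self (f ω))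
  have hlin : ∫⁻ ω, ENNReal.ofReal (negf ω) ∂P = ⊤ := by
    by_contra h
    exact hnegnint ⟨hnm.aestronglyMeasurable,
      (hasFiniteIntegral_iff_ofReal (ae_of_all _ hnegnn)).mpr (lt_top_iff_ne_top.mpr h)⟩
  have hsup : ⨆ M : ℕ, ∫⁻ ω, ENNReal.ofReal (min (negf ω) (M : ℝ)) ∂P = ⊤ := by
    rw [← lintegral_iSup (fun M => (hnm.min measurable_const).ennreal_ofReal)
      (fun M M' hMM' ω => ENNReal.ofReal_le_ofReal
        (min_le_min le_rfl (Nat.cast_le.mpr hMM')))]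
    rw [← hlin]
    congr 1
    funext ω
    apply le_antisymm
    · exact iSup_le fun M => ENNReal.ofReal_le_ofReal (min_le_left _ _)
    · have h0 : ENNReal.ofReal (negf ω)
          = ENNReal.ofReal (min (negf ω) ((⌈negf ω⌉₊ : ℕ) : ℝ)) := by
        rw [min_eq_left (Nat.le_ceil _)]
      rw [h0]
      exact le_iSup (fun M : ℕ => ENNReal.ofReal (min (negf ω) (M : ℝ))) _
  set pI : ℝ≥0∞ := ∫⁻ ω, ENNReal.ofReal (max (f ω) 0) ∂P with hpIdef
  have hpI : pI ≠ ⊤ := by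
    have := (hasFiniteIntegral_iff_ofReal
      (ae_of_all _ fun ω => le_max_right (f ω) 0)).mp hposi.hasFiniteIntegral
    exact this.ne
  have hex : ∃ M : ℕ, pI < ∫⁻ ω, ENNReal.ofReal (min (negf ω) (M : ℝ)) ∂P := by
    rw [← lt_iSup_iff, hsup]
    exact lt_top_iff_ne_top.mpr hpI
  obtain ⟨M, hM⟩ := hex
  have hMfin : ∫⁻ ω, ENNReal.ofReal (min (negf ω) (M : ℝ)) ∂P ≤ (M : ℝ≥0∞) := by
    calc ∫⁻ ω, ENNReal.ofReal (min (negf ω) (M : ℝ)) ∂P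
        ≤ ∫⁻ _, ENNReal.ofReal (M : ℝ) ∂P :=
          lintegral_mono fun ω => ENNReal.ofReal_le_ofReal (min_le_right _ _)
      _ = ENNReal.ofReal (M : ℝ) := by simp
      _ ≤ (M : ℝ≥0∞) := by rw [ENNReal.ofReal_natCast]
  have hMne : ∫⁻ ω, ENNReal.ofReal (min (negf ω) (M : ℝ)) ∂P ≠ ⊤ :=
    (lt_of_le_of_lt hMfin (ENNReal.natCast_lt_top M)).ne
  have e1 : ∫ ω, max (f ω) 0 ∂P = pI.toReal := by
    rw [integral_eq_lintegral_of_nonneg_ae (ae_of_all _ fun ω => le_max_right (f ω) 0)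
      (hf.max measurable_const).aestronglyMeasurable]
  have e2 : ∫ ω, min (negf ω) (M : ℝ) ∂P
      = (∫⁻ ω, ENNReal.ofReal (min (negf ω) (M : ℝ)) ∂P).toReal := by
    rw [integral_eq_lintegral_of_nonneg_ae
      (ae_of_all _ fun ω => le_min (hnegnn ω) (Nat.cast_nonneg M))
      ((hnm.min measurable_const).aestronglyMeasurable)]
  refine ⟨M, hgint M, ?_⟩
  rw [hdec M, integral_sub hposi (htint M), e1, e2]
  have := ENNReal.toReal_mono hMne hM.le
  linarith

lemma H2zero (c : ℝ) (hc : 0 < c) (b : ℕ → ℝ) :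
    ∀ ε > 0, ∀ᶠ n : ℕ in atTop,
      (n : ℝ) * (0 - ε) ≤ Real.log (c + ∑ l ∈ Finset.Icc 1 n, Real.exp (b l)) := by
  intro ε hε
  have h1 : Tendsto (fun n : ℕ => (n : ℝ) * (0 - ε)) atTop atBot :=
    Tendsto.atTop_mul_const_of_neg (by linarith) tendsto_natCast_atTop_atTop
  filter_upwards [h1.eventually (eventually_le_atBot (Real.log c))] with n hn
  refine hn.trans (Real.log_le_log hc ?_)
  exact le_add_of_nonneg_right (Finset.sum_nonneg fun l _ => (Real.exp_pos _).le)

theorem stmt8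
    {Ω : Type*} [MeasurableSpace Ω] (P : Measure Ω) [IsProbabilityMeasure P]
    (ξ : ℕ → Ω → ℝ) (hmeas : ∀ n, Measurable (ξ n))
    (hpos : ∀ n, ∀ᵐ ω ∂P, 0 < ξ n ω)
    (hindep : iIndepFun ξ P)
    (hident : ∀ n, IdentDistrib (ξ n) (ξ 0) P P)
    (hpospart : Integrable (fun ω => max (Real.log (ξ 0 ω)) 0) P)
    (lam : EReal)
    (hlam : (Integrable (fun ω => Real.log (ξ 0 ω)) P →
        lam = ((∫ ω, Real.log (ξ 0 ω) ∂P : ℝ) : EReal)) ∧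
      (¬ Integrable (fun ω => Real.log (ξ 0 ω)) P → lam = ⊥))
    (hlt : lam < ⊤)
    (c : ℝ) (hc : 0 < c) (δ : ℕ → ℝ) (hδ : Tendsto δ atTop (nhds 0)) :
    ∀ᵐ ω ∂P, Tendsto
      (fun n : ℕ =>
        Real.log (c + ∑ l ∈ Finset.Icc 1 n,
          Real.exp ((l : ℝ) *
            ((∑ k ∈ Finset.Icc 1 l, Real.log (ξ k ω)) / (l : ℝ) + δ l))) / (n : ℝ))
      atTop (nhds (max lam.toReal 0)) := by
  by_cases hint : Integrable (fun ω => Real.log (ξ 0 ω)) P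
  · -- integrable case
    set μ : ℝ := ∫ ω, Real.log (ξ 0 ω) ∂P with hμ
    have hlamval : lam.toReal = μ := by rw [hlam.1 hint]; simp
    set X : ℕ → Ω → ℝ := fun i ω => Real.log (ξ (i + 1) ω) with hX
    have hid : ∀ i, IdentDistrib (X i) (fun ω => Real.log (ξ 0 ω)) P P :=
      fun i => (hident (i + 1)).comp Real.measurable_log
    have hident' : ∀ i, IdentDistrib (X i) (X 0) P P :=
      fun i => (hid i).trans (hid 0).symm
    have hint' : Integrable (X 0) P := (hid 0).integrable_iff.mpr hint
    have hindep' : Pairwise (Function.onFun (IndepFun · · P) X) := fun i j hij =>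
      (hindep.indepFun (by omega : i + 1 ≠ j + 1)).comp Real.measurable_log Real.measurable_log
    have hμ' : ∫ ω, X 0 ω ∂P = μ := (hid 0).integral_eq
    have hsl := strong_law_ae_real X hint' hindep' hident'
    rw [hμ'] at hsl
    filter_upwards [hsl] with ω hω
    rw [hlamval]
    have hS : ∀ n : ℕ, ∑ k ∈ Finset.Icc 1 n, Real.log (ξ k ω) = ∑ i ∈ Finset.range n, X i ω :=
      fun n => sum_Icc_one' _ n
    set b : ℕ → ℝ := fun l =>
      (l : ℝ) * ((∑ k ∈ Finset.Icc 1 l, Real.log (ξ k ω)) / (l : ℝ) + δ l) with hb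
    have hφ : Tendsto (fun l : ℕ =>
        (∑ k ∈ Finset.Icc 1 l, Real.log (ξ k ω)) / (l : ℝ) + δ l) atTop (𝓝 μ) := by
      have := (hω.congr (fun n => by rw [← hS n])).add hδ
      rwa [add_zero] at this
    have H1 : ∀ ε > 0, ∀ᶠ l : ℕ in atTop, b l ≤ (l : ℝ) * (max μ 0 + ε) := by
      intro ε hε
      have : μ < max μ 0 + ε := lt_of_le_of_lt (le_max_left _ _) (by linarith)
      filter_upwards [hφ.eventually_le_const this] with l hl
      exact mul_le_mul_of_nonneg_left hl (Nat.cast_nonneg l)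
    have H2 : ∀ ε > 0, ∀ᶠ n : ℕ in atTop, (n : ℝ) * (max μ 0 - ε) ≤
        Real.log (c + ∑ l ∈ Finset.Icc 1 n, Real.exp (b l)) := by
      rcases le_or_gt 0 μ with hμ0 | hμ0
      · rw [max_eq_left hμ0]
        intro ε hε
        filter_upwards [hφ.eventually_const_le (show μ - ε < μ by linarith),
          eventually_ge_atTop 1] with n hn h1n
        have hbn : (n : ℝ) * (μ - ε) ≤ b n := mul_le_mul_of_nonneg_left hn (Nat.cast_nonneg n)
        refine hbn.trans ?_
        rw [Real.le_log_iff_exp_le (add_pos_of_pos_of_nonneg hc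
          (Finset.sum_nonneg fun l _ => (Real.exp_pos _).le))]
        have : Real.exp (b n) ≤ ∑ l ∈ Finset.Icc 1 n, Real.exp (b l) :=
          Finset.single_le_sum (f := fun l => Real.exp (b l))
            (fun i _ => (Real.exp_pos _).le) (Finset.mem_Icc.mpr ⟨h1n, le_refl n⟩)
        linarith
      · rw [max_eq_right hμ0.le]
        exact H2zero c hc b
    exact logsum_tendsto (max μ 0) c hc (le_max_right _ _) b H1 H2
  · -- non-integrable case
    obtain ⟨M, hgint, hgle⟩ := exists_trunc P (fun ω => Real.log (ξ 0 ω))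
      (Real.measurable_log.comp (hmeas 0)) hpospart hint
    set gM : ℝ → ℝ := fun x => max (Real.log x) (-(M : ℝ)) with hgM
    have hgMmeas : Measurable gM := Real.measurable_log.max measurable_const
    set Y : ℕ → Ω → ℝ := fun i ω => gM (ξ (i + 1) ω) with hY
    have hidY : ∀ i, IdentDistrib (Y i) (fun ω => gM (ξ 0 ω)) P P :=
      fun i => (hident (i + 1)).comp hgMmeas
    have hidentY : ∀ i, IdentDistrib (Y i) (Y 0) P P :=
      fun i => (hidY i).trans (hidY 0).symm
    have hintY : Integrable (Y 0) P := (hidY 0).integrable_iff.mpr hgint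
    have hindepY : Pairwise (Function.onFun (IndepFun · · P) Y) := fun i j hij =>
      (hindep.indepFun (by omega : i + 1 ≠ j + 1)).comp hgMmeas hgMmeas
    have hμY : ∫ ω, Y 0 ω ∂P = ∫ ω, gM (ξ 0 ω) ∂P := (hidY 0).integral_eq
    have hsl := strong_law_ae_real Y hintY hindepY hidentY
    rw [hμY] at hsl
    set μg : ℝ := ∫ ω, gM (ξ 0 ω) ∂P with hμgdef
    filter_upwards [hsl] with ω hω
    have hlamval : lam.toReal = 0 := by rw [hlam.2 hint]; simp
    rw [hlamval, max_self]
    set b : ℕ → ℝ := fun l =>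
      (l : ℝ) * ((∑ k ∈ Finset.Icc 1 l, Real.log (ξ k ω)) / (l : ℝ) + δ l) with hb
    have H1 : ∀ ε > 0, ∀ᶠ l : ℕ in atTop, b l ≤ (l : ℝ) * ((0 : ℝ) + ε) := by
      intro ε hε
      have hε2 : (0 : ℝ) < ε / 2 := by positivity
      have hST : ∀ l : ℕ, (∑ k ∈ Finset.Icc 1 l, Real.log (ξ k ω))
          ≤ ∑ i ∈ Finset.range l, Y i ω := by
        intro l
        rw [sum_Icc_one']
        exact Finset.sum_le_sum fun i _ => le_max_left _ _
      filter_upwards [hω.eventually_le_const (show μg < μg + ε / 2 by linarith),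
        hδ.eventually_le_const hε2] with l h1 h2
      have hdiv : (∑ k ∈ Finset.Icc 1 l, Real.log (ξ k ω)) / (l : ℝ)
          ≤ (∑ i ∈ Finset.range l, Y i ω) / (l : ℝ) :=
        div_le_div_of_nonneg_right (hST l) (Nat.cast_nonneg l)
      have : (∑ k ∈ Finset.Icc 1 l, Real.log (ξ k ω)) / (l : ℝ) + δ l ≤ (0 : ℝ) + ε := by
        have := hdiv.trans h1
        linarith
      exact mul_le_mul_of_nonneg_left this (Nat.cast_nonneg l)
    exact logsum_tendsto 0 c hc le_rfl b H1 (H2zero c hc b)
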